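/- Let n = p + q ≥ 2. Every homogeneous quadratic polynomial vector field on ℝⁿ decomposes uniquely as a sum of a quadratic conformal field and a divergence-free quadratic field: Vect₂(ℝⁿ) = (Vect₂(ℝⁿ) ∩ conf_poly(p,q)) ⊕ ker(div), where div is restricted to Vect₂(ℝⁿ). Explicitly, for X ∈ Vect₂(ℝⁿ) with α ∈ (ℝⁿ)* defined by α(x) = div X, the field (1/n)α* is conformal and X − (1/n)α* is divergence-free, and the two summands intersect trivially. -/

import Mathlib

open MvPolynomial

/-- Polynomial vector fields on ℝⁿ. -/
abbrev VF (n : ℕ) := Fin n → MvPolynomial (Fin n) ℝ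

/-- The divergence `div X = ∑_i ∂_i Xⁱ` of a polynomial vector field. -/
noncomputable def vdiv {n : ℕ} (Xv : VF n) : MvPolynomial (Fin n) ℝ :=
  ∑ i, pderiv i (Xv i)

/-- The signs `a_i` of the flat metric of signature `(p,q)`. -/
def metricSign (p : ℕ) {n : ℕ} (i : Fin n) : ℝ := if (i : ℕ) < p then 1 else -1

/-- The conformal Killing equations for signature `(p,q)`. -/
def IsConformal (p : ℕ) {n : ℕ} (Xv : VF n) : Prop :=
  ∀ i j : Fin n, i ≠ j →
    metricSign p j • pderiv i (Xv j) + metricSign p i • pderiv j (Xv i) = 0 ∧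
    pderiv i (Xv i) = pderiv j (Xv j)

/-- `α* = α(x) ∑_i xⁱ ∂_i − ½ (∑_i a_i (xⁱ)²) α♯` with `α♯ = ∑_i a_i α_i ∂_i`. -/
noncomputable def alphaStar (p : ℕ) {n : ℕ} (α : Fin n → ℝ) : VF n :=
  fun i => (∑ j, C (α j) * MvPolynomial.X j) * MvPolynomial.X i
    - C ((1 : ℝ)/2) * (∑ j, C (metricSign p j) * (MvPolynomial.X j)^2)
      * C (metricSign p i * α i)

lemma coeff_pderiv {σ : Type*} {R : Type*} [CommSemiring R] (i : σ) (f : MvPolynomial σ R)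
    (m : σ →₀ ℕ) :
    coeff m (pderiv i f) = ((m i + 1 : ℕ) : R) * coeff (m + Finsupp.single i 1) f := by
  classical
  induction f using MvPolynomial.induction_on' with
  | add f g hf hg => simp [hf, hg, mul_add]
  | monomial s a =>
    rw [pderiv_monomial, coeff_monomial, coeff_monomial]
    split_ifs with h1 h2 h2
    · subst h2
      simp [Finsupp.add_apply, Finsupp.single_apply, mul_comm]
    · rcases Nat.eq_zero_or_pos (s i) with hz | hp
      · simp [hz]
      · exfalso
        apply h2
        rw [← h1]
        ext j
        simp only [Finsupp.add_apply, Finsupp.tsub_apply, Finsupp.single_apply]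
        by_cases hj : i = j
        · subst hj; simp; omega
        · simp [hj]
    · exfalso
      apply h1
      rw [h2]
      ext j
      simp only [Finsupp.add_apply, Finsupp.tsub_apply, Finsupp.single_apply]
      omega
    · ring

lemma degree_add' {σ : Type*} (a b : σ →₀ ℕ) :
    Finsupp.degree (a + b) = Finsupp.degree a + Finsupp.degree b := by
  simp [Finsupp.degree_eq_weight_one, map_add]

lemma degree_single' {σ : Type*} (j : σ) (c : ℕ) :
    Finsupp.degree (Finsupp.single j c) = c := by
  classical
  rcases eq_or_ne c 0 with rfl | hc
  · simp [Finsupp.degree]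
  · exact Finsupp.degree_single j c

lemma deg_succ_classify {σ : Type*} {m : σ →₀ ℕ} {k : ℕ}
    (h : Finsupp.degree m = k + 1) :
    ∃ j m', m = m' + Finsupp.single j 1 ∧ Finsupp.degree m' = k := by
  classical
  have hm : m ≠ 0 := by
    intro h0; rw [h0] at h; simp at h
  obtain ⟨j, hj⟩ : ∃ j, m j ≠ 0 := by
    by_contra hall
    push_neg at hall
    exact hm (Finsupp.ext fun j => hall j)
  refine ⟨j, m - Finsupp.single j 1, ?_, ?_⟩
  · ext l
    simp only [Finsupp.add_apply, Finsupp.tsub_apply, Finsupp.single_apply]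
    by_cases hl : j = l
    · subst hl; rw [if_pos rfl]; omega
    · simp [hl]
  · have : Finsupp.degree ((m - Finsupp.single j 1) + Finsupp.single j 1) = k + 1 := by
      rw [show (m - Finsupp.single j 1) + Finsupp.single j 1 = m from ?_]
      · exact h
      · ext l
        simp only [Finsupp.add_apply, Finsupp.tsub_apply, Finsupp.single_apply]
        by_cases hl : j = l
        · subst hl; rw [if_pos rfl]; omega
        · simp [hl]
    rw [degree_add', degree_single'] at this
    omega

lemma deg1_classify {σ : Type*} {m : σ →₀ ℕ} (h : Finsupp.degree m = 1) :
    ∃ j, m = Finsupp.single j 1 := by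
  obtain ⟨j, m', rfl, hm'⟩ := deg_succ_classify h
  rw [Finsupp.degree_eq_zero_iff] at hm'
  exact ⟨j, by rw [hm', zero_add]⟩

lemma deg2_classify {σ : Type*} {m : σ →₀ ℕ} (h : Finsupp.degree m = 2) :
    ∃ j k, m = Finsupp.single j 1 + Finsupp.single k 1 := by
  obtain ⟨j, m', rfl, hm'⟩ := deg_succ_classify h
  obtain ⟨k, rfl⟩ := deg1_classify hm'
  exact ⟨k, j, rfl⟩

lemma isHomog_degree {σ R : Type*} [CommSemiring R] {f : MvPolynomial σ R} {k : ℕ}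
    (hf : f.IsHomogeneous k) {m : σ →₀ ℕ} (hm : coeff m f ≠ 0) : Finsupp.degree m = k := by
  rw [Finsupp.degree_eq_weight_one]
  exact hf hm

lemma pderiv_isHomog {σ R : Type*} [CommSemiring R] {f : MvPolynomial σ R} {k : ℕ}
    (hf : f.IsHomogeneous (k + 1)) (i : σ) : (pderiv i f).IsHomogeneous k := by
  intro m hm
  rw [_root_.coeff_pderiv] at hm
  have h2 : coeff (m + Finsupp.single i 1) f ≠ 0 := by
    intro h0; rw [h0, mul_zero] at hm; exact hm rfl
  have := isHomog_degree hf h2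
  rw [degree_add', degree_single'] at this
  rw [show (Finsupp.weight 1 : (σ →₀ ℕ) →+ ℕ) = Finsupp.weight (fun _ => 1) from rfl,
    ← Finsupp.degree_eq_weight_one]
  omega

lemma homog1_eq {n : ℕ} {f : MvPolynomial (Fin n) ℝ} (hf : f.IsHomogeneous 1) :
    f = ∑ j, C (coeff (Finsupp.single j 1) f) * X j := by
  apply MvPolynomial.ext; intro m
  rw [coeff_sum]
  simp only [coeff_C_mul, coeff_X']
  by_cases hm : ∃ j0 : Fin n, m = Finsupp.single j0 1
  · obtain ⟨j0, rfl⟩ := hm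
    rw [Finset.sum_eq_single j0]
    · simp
    · intro b _ hb
      rw [if_neg, mul_zero]
      exact fun h => hb (Finsupp.single_left_injective one_ne_zero h)
    · intro h; exact absurd (Finset.mem_univ j0) h
  · have h0 : coeff m f = 0 := by
      by_contra h
      exact hm (deg1_classify (isHomog_degree hf h))
    rw [h0]
    symm
    apply Finset.sum_eq_zero
    intro b _
    rw [if_neg, mul_zero]
    exact fun h => hm ⟨b, h.symm⟩

lemma metricSign_sq (p : ℕ) {n : ℕ} (i : Fin n) : metricSign p i * metricSign p i = 1 := by
  unfold metricSign; split_ifs <;> norm_num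

lemma metricSign_ne_zero (p : ℕ) {n : ℕ} (i : Fin n) : metricSign p i ≠ 0 := by
  unfold metricSign; split_ifs <;> norm_num

lemma pderiv_L {n : ℕ} (α : Fin n → ℝ) (k : Fin n) :
    pderiv k (∑ j, C (α j) * MvPolynomial.X j) = C (α k) := by
  rw [map_sum, Finset.sum_eq_single k]
  · rw [pderiv_C_mul, pderiv_X_self, mul_one]
  · intro b _ hb
    rw [pderiv_C_mul, pderiv_X_of_ne hb, mul_zero]
  · intro h; exact absurd (Finset.mem_univ k) h

lemma pderiv_Q (p : ℕ) {n : ℕ} (k : Fin n) :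
    pderiv k (∑ j, C (metricSign p j) * (MvPolynomial.X j)^2)
      = C (2 * metricSign p k) * MvPolynomial.X k := by
  rw [map_sum, Finset.sum_eq_single k]
  · rw [pderiv_C_mul, pderiv_pow, pderiv_X_self]
    have h2 : ((2:ℕ) : MvPolynomial (Fin n) ℝ) = C (2:ℝ) := by push_cast; rfl
    rw [h2, C_mul]
    ring
  · intro b _ hb
    rw [pderiv_C_mul, pderiv_pow, pderiv_X_of_ne hb]
    ring
  · intro h; exact absurd (Finset.mem_univ k) h

lemma pderiv_alphaStar (p : ℕ) {n : ℕ} (α : Fin n → ℝ) (k i : Fin n) :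
    pderiv k (alphaStar p α i)
      = C (α k) * MvPolynomial.X i
        + (if k = i then (∑ j, C (α j) * MvPolynomial.X j) else 0)
        - C (metricSign p k * metricSign p i * α i) * MvPolynomial.X k := by
  unfold alphaStar
  rw [map_sub, pderiv_mul, pderiv_L, pderiv_mul, pderiv_mul, pderiv_Q, pderiv_C, pderiv_C]
  have key : C ((1:ℝ)/2) * C (2 * metricSign p k) * C (metricSign p i * α i)
      = (C (metricSign p k * metricSign p i * α i) : MvPolynomial (Fin n) ℝ) := by
    rw [← C_mul, ← C_mul]
    congr 1
    ring
  rcases eq_or_ne k i with rfl | hki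
  · rw [pderiv_X_self, if_pos rfl]
    linear_combination (-(MvPolynomial.X k)) * key
  · rw [pderiv_X_of_ne (Ne.symm hki), if_neg hki]
    linear_combination (-(MvPolynomial.X k)) * key

lemma alphaStar_isHomog (p : ℕ) {n : ℕ} (α : Fin n → ℝ) (i : Fin n) :
    (alphaStar p α i).IsHomogeneous 2 := by
  apply MvPolynomial.IsHomogeneous.sub
  · have h1 : (∑ j, C (α j) * MvPolynomial.X j : MvPolynomial (Fin n) ℝ).IsHomogeneous 1 :=
      IsHomogeneous.sum _ _ _ fun j _ => isHomogeneous_C_mul_X _ _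
    simpa using h1.mul (isHomogeneous_X ℝ i)
  · have hQ : (∑ j, C (metricSign p j) * (MvPolynomial.X j)^2 :
        MvPolynomial (Fin n) ℝ).IsHomogeneous 2 :=
      IsHomogeneous.sum _ _ _ fun j _ => isHomogeneous_C_mul_X_pow _ _ _
    simpa using ((hQ.C_mul ((1:ℝ)/2)).mul (isHomogeneous_C (Fin n) (metricSign p i * α i)))

lemma vdiv_alphaStar (p : ℕ) {n : ℕ} (α : Fin n → ℝ) :
    vdiv (alphaStar p α) = (n : ℝ) • ∑ j, C (α j) * MvPolynomial.X j := by
  unfold vdiv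
  have h : ∀ i : Fin n, pderiv i (alphaStar p α i) = ∑ j, C (α j) * MvPolynomial.X j := by
    intro i
    rw [pderiv_alphaStar, if_pos rfl, metricSign_sq, one_mul]
    ring
  rw [Finset.sum_congr rfl fun i _ => h i, Finset.sum_const, Finset.card_univ,
    Fintype.card_fin, ← Nat.cast_smul_eq_nsmul ℝ]

lemma pderiv_alphaStar_diag (p : ℕ) {n : ℕ} (α : Fin n → ℝ) (i : Fin n) :
    pderiv i (alphaStar p α i) = ∑ j, C (α j) * MvPolynomial.X j := by
  rw [pderiv_alphaStar, if_pos rfl, metricSign_sq, one_mul]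
  ring

lemma alphaStar_conformal (p : ℕ) {n : ℕ} (α : Fin n → ℝ) :
    IsConformal p (alphaStar p α) := by
  intro i j hij
  constructor
  · rw [pderiv_alphaStar, pderiv_alphaStar, if_neg hij, if_neg (Ne.symm hij)]
    have hi : (C (metricSign p i) : MvPolynomial (Fin n) ℝ) * C (metricSign p i) = 1 := by
      rw [← C_mul, metricSign_sq, C_1]
    have hj : (C (metricSign p j) : MvPolynomial (Fin n) ℝ) * C (metricSign p j) = 1 := by
      rw [← C_mul, metricSign_sq, C_1]
    simp only [smul_eq_C_mul, C_mul]
    linear_combination (-(C (metricSign p j) * C (α i) * MvPolynomial.X j)) * hi + (-(C (metricSign p i) * C (α j) * MvPolynomial.X i)) * hj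
  · rw [pderiv_alphaStar_diag, pderiv_alphaStar_diag]

lemma conformal_smul (p : ℕ) {n : ℕ} {Xv : VF n} (c : ℝ) (h : IsConformal p Xv) :
    IsConformal p (c • Xv) := by
  intro i j hij
  obtain ⟨h1, h2⟩ := h i j hij
  constructor
  · have : ∀ a b : Fin n, pderiv a ((c • Xv) b) = c • pderiv a (Xv b) := by
      intro a b
      rw [Pi.smul_apply, Derivation.map_smul]
    rw [this, this, smul_comm (metricSign p j) c, smul_comm (metricSign p i) c, ← smul_add, h1,
      smul_zero]
  · rw [Pi.smul_apply, Pi.smul_apply, Derivation.map_smul, Derivation.map_smul, h2]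

lemma vdiv_sub {n : ℕ} (f g : VF n) : vdiv (f - g) = vdiv f - vdiv g := by
  unfold vdiv
  rw [← Finset.sum_sub_distrib]
  exact Finset.sum_congr rfl fun i _ => by rw [Pi.sub_apply, map_sub]

lemma vdiv_smul {n : ℕ} (c : ℝ) (f : VF n) : vdiv (c • f) = c • vdiv f := by
  unfold vdiv
  rw [Finset.smul_sum]
  exact Finset.sum_congr rfl fun i _ => by rw [Pi.smul_apply, Derivation.map_smul]

lemma vdiv_isHomog {n : ℕ} {Xv : VF n} (hX : ∀ i, (Xv i).IsHomogeneous 2) :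
    (vdiv Xv).IsHomogeneous 1 :=
  IsHomogeneous.sum _ _ _ fun i _ => pderiv_isHomog (hX i) i

lemma pderiv_comm' {n : ℕ} (j k : Fin n) (f : MvPolynomial (Fin n) ℝ) :
    pderiv j (pderiv k f) = pderiv k (pderiv j f) := by
  apply MvPolynomial.ext; intro m
  rcases eq_or_ne j k with rfl | hjk
  · rfl
  · rw [_root_.coeff_pderiv, _root_.coeff_pderiv, _root_.coeff_pderiv, _root_.coeff_pderiv]
    have h1 : ((m + Finsupp.single j 1 : Fin n →₀ ℕ) k : ℕ) = m k := by
      rw [Finsupp.add_apply, Finsupp.single_apply, if_neg hjk, add_zero]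
    have h2 : ((m + Finsupp.single k 1 : Fin n →₀ ℕ) j : ℕ) = m j := by
      rw [Finsupp.add_apply, Finsupp.single_apply, if_neg (Ne.symm hjk), add_zero]
    rw [h1, h2, add_assoc, add_assoc, add_comm (Finsupp.single j 1)]
    ring

lemma smul_zero_cancel {n : ℕ} {c : ℝ} (hc : c ≠ 0) {f : MvPolynomial (Fin n) ℝ}
    (h : c • f = 0) : f = 0 := by
  have h2 := congrArg (fun g => c⁻¹ • g) h
  simpa [smul_smul, inv_mul_cancel₀ hc] using h2

lemma conf_divfree_zero (p : ℕ) {n : ℕ} (h2 : 2 ≤ n) (Yv : VF n)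
    (hY : ∀ i, (Yv i).IsHomogeneous 2) (hc : IsConformal p Yv) (hd : vdiv Yv = 0) :
    Yv = 0 := by
  have hncast : (n : ℝ) ≠ 0 := by
    have : 0 < n := lt_of_lt_of_le two_pos h2
    exact_mod_cast this.ne'
  have hdiag : ∀ i : Fin n, pderiv i (Yv i) = 0 := by
    intro i
    have hall : ∀ k : Fin n, pderiv k (Yv k) = pderiv i (Yv i) := by
      intro k
      rcases eq_or_ne k i with rfl | hk
      · rfl
      · exact (hc k i hk).2
    have hz : (n : ℝ) • pderiv i (Yv i) = 0 := by
      rw [← hd]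
      unfold vdiv
      rw [Finset.sum_congr rfl fun k _ => hall k, Finset.sum_const, Finset.card_univ,
        Fintype.card_fin, ← Nat.cast_smul_eq_nsmul ℝ]
    exact smul_zero_cancel hncast hz
  set P : Fin n → Fin n → Fin n → MvPolynomial (Fin n) ℝ :=
    fun i j k => metricSign p i • pderiv j (pderiv k (Yv i)) with hP
  have hsym : ∀ i j k, P i j k = P i k j := by
    intro i j k
    simp only [hP]
    rw [pderiv_comm']
  have hanti : ∀ a b c, P a b c = - P c b a := by
    intro a b c
    rcases eq_or_ne a c with rfl | hac
    · have h0 : P a b a = 0 := by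
        simp only [hP]
        rw [hdiag a, map_zero, smul_zero]
      rw [h0, neg_zero]
    · have h1 := (hc a c hac).1
      have h2 := congrArg (pderiv b) h1
      rw [map_add, map_zero, Derivation.map_smul, Derivation.map_smul] at h2
      simp only [hP]
      exact eq_neg_of_add_eq_zero_right h2
  have hPzero : ∀ i j k, P i j k = 0 := by
    intro i j k
    have hbraid : P i j k = - P i j k := by
      calc P i j k = P i k j := hsym i j k
        _ = - P j k i := hanti i k j
        _ = - P j i k := by rw [hsym j k i]
        _ = P k i j := by rw [hanti j i k, neg_neg]
        _ = P k j i := hsym k i j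
        _ = - P i j k := by rw [hanti k j i]
    have h2 : (2 : ℝ) • P i j k = 0 := by
      rw [two_smul]
      nth_rewrite 1 [hbraid]
      exact neg_add_cancel _
    exact smul_zero_cancel two_ne_zero h2
  have hsecond : ∀ i j k : Fin n, pderiv j (pderiv k (Yv i)) = 0 := by
    intro i j k
    have := hPzero i j k
    simp only [hP] at this
    exact smul_zero_cancel (metricSign_ne_zero p i) this
  funext i
  show Yv i = 0
  apply MvPolynomial.ext
  intro m
  rw [coeff_zero]
  by_contra hcm
  obtain ⟨j, k, rfl⟩ := deg2_classify (isHomog_degree (hY i) hcm)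
  have h0 : coeff 0 (pderiv j (pderiv k (Yv i))) = 0 := by
    rw [hsecond]
    exact coeff_zero _
  rw [_root_.coeff_pderiv, _root_.coeff_pderiv, zero_add] at h0
  simp only [Finsupp.coe_zero, Pi.zero_apply, zero_add, Nat.cast_one, one_mul] at h0
  rcases mul_eq_zero.mp h0 with h | h
  · have : ((Finsupp.single j 1 : Fin n →₀ ℕ) k + 1 : ℕ) ≠ 0 := Nat.succ_ne_zero _
    exact this (by exact_mod_cast h)
  · exact hcm h

/-- For `n = p + q ≥ 2`, every homogeneous quadratic vector field `X` decomposes as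
`X = (1/n)α* + (X − (1/n)α*)` with `α(x) = div X`, where `(1/n)α*` is a quadratic
conformal field and `X − (1/n)α*` is divergence free; moreover a quadratic field
that is both conformal and divergence free vanishes (so the sum is direct):
`Vect₂(ℝⁿ) = (Vect₂(ℝⁿ) ∩ conf_poly(p,q)) ⊕ ker div`. -/
theorem vect2_decomposition (p q n : ℕ) (hn : n = p + q) (h2 : 2 ≤ n) :
    (∀ Xv : VF n, (∀ i, (Xv i).IsHomogeneous 2) →
      IsConformal p ((n : ℝ)⁻¹ •
        alphaStar p (fun j => MvPolynomial.coeff (Finsupp.single j 1) (vdiv Xv))) ∧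
      (∀ i, (((n : ℝ)⁻¹ •
        alphaStar p (fun j => MvPolynomial.coeff (Finsupp.single j 1) (vdiv Xv))) i).IsHomogeneous 2) ∧
      vdiv (Xv - (n : ℝ)⁻¹ •
        alphaStar p (fun j => MvPolynomial.coeff (Finsupp.single j 1) (vdiv Xv))) = 0) ∧
    (∀ Yv : VF n, (∀ i, (Yv i).IsHomogeneous 2) →
      IsConformal p Yv → vdiv Yv = 0 → Yv = 0) := by
  have hn0 : (n : ℝ) ≠ 0 := by
    have hpos : 0 < n := lt_of_lt_of_le two_pos h2
    exact_mod_cast hpos.ne'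
  constructor
  · intro Xv hX
    refine ⟨conformal_smul p _ (alphaStar_conformal p _), ?_, ?_⟩
    · intro i
      rw [Pi.smul_apply, smul_eq_C_mul]
      exact (alphaStar_isHomog p _ i).C_mul _
    · rw [vdiv_sub, vdiv_smul, vdiv_alphaStar, smul_smul, inv_mul_cancel₀ hn0, one_smul,
        sub_eq_zero]
      exact homog1_eq (vdiv_isHomog hX)
  · intro Yv hY hc hd
    exact conf_divfree_zero p h2 Yv hY hc hd
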